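/- Let {B_n} and {C_n} be strictly increasing sequences of positive reals with B_1/B_2 ≤ C_1/C_2. If for every integer n ≥ 1, (B_{n+1} - B_n)/(B_{n+2} - B_{n+1}) ≤ (C_{n+1} - C_n)/(C_{n+2} - C_{n+1}), then B_n/B_{n+1} ≤ C_n/C_{n+1} for every integer n ≥ 1. -/

import Mathlib

theorem stmt_0 (B C : ℕ → ℝ)
    (hBpos : ∀ n, 1 ≤ n → 0 < B n) (hCpos : ∀ n, 1 ≤ n → 0 < C n)
    (hBmono : ∀ n, 1 ≤ n → B n < B (n + 1)) (hCmono : ∀ n, 1 ≤ n → C n < C (n + 1))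
    (h12 : B 1 / B 2 ≤ C 1 / C 2)
    (h : ∀ n, 1 ≤ n →
      (B (n + 1) - B n) / (B (n + 2) - B (n + 1)) ≤ (C (n + 1) - C n) / (C (n + 2) - C (n + 1))) :
    ∀ n, 1 ≤ n → B n / B (n + 1) ≤ C n / C (n + 1) := by
  intro n hn
  induction n, hn using Nat.le_induction with
  | base => exact h12
  | succ n hn ih =>
    have hb1 := hBpos n hn
    have hc1 := hCpos n hn
    have hb12 := hBmono n hn
    have hc12 := hCmono n hn
    have hb23 := hBmono (n + 1) (by omega)
    have hc23 := hCmono (n + 1) (by omega)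
    have hb2 : (0:ℝ) < B (n+1) := hb1.trans hb12
    have hc2 : (0:ℝ) < C (n+1) := hc1.trans hc12
    have hb3 : (0:ℝ) < B (n+2) := hb2.trans hb23
    have hc3 : (0:ℝ) < C (n+2) := hc2.trans hc23
    have ih' : B n * C (n+1) ≤ C n * B (n+1) := by
      rw [div_le_div_iff₀ hb2 hc2] at ih; linarith
    have hkey := h n hn
    have hkey' : (B (n+1) - B n) * (C (n+2) - C (n+1)) ≤
        (C (n+1) - C n) * (B (n+2) - B (n+1)) := by
      rw [div_le_div_iff₀ (by linarith) (by linarith)] at hkey; linarith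
    rw [div_le_div_iff₀ hb3 hc3]
    -- (c2 - c1) * b2 ≤ c2 * (b2 - b1)
    have step1 : (C (n+1) - C n) * B (n+1) ≤ C (n+1) * (B (n+1) - B n) := by nlinarith
    have step2 : B (n+1) * (C (n+2) - C (n+1)) * (C (n+1) - C n) ≤
        C (n+1) * (B (n+2) - B (n+1)) * (C (n+1) - C n) := by nlinarith
    have step3 : B (n+1) * (C (n+2) - C (n+1)) ≤ C (n+1) * (B (n+2) - B (n+1)) :=
      le_of_mul_le_mul_right (by linarith [step2]) (by linarith : (0:ℝ) < C (n+1) - C n)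
    nlinarith
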